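/- For ε ∈ (0,1/2), x ∈ ℝ, and 0 ≤ Δ ≤ Δ_min where Δ_min = 2·Φ⁻¹(1/(2(1-ε))), the corrupted Gaussian divergence satisfies kl^ε_G(x, x+Δ) = 0, i.e., the infimum over corruption pairs H, H' of KL(N(x,1) ⊙_ε H, N(x+Δ,1) ⊙_ε H') is zero. -/

import Mathlib

open MeasureTheory ProbabilityTheory Real Set
open scoped ENNReal

noncomputable section

/-- Standard normal probability density function. -/
def stdphi (x : ℝ) : ℝ := (Real.sqrt (2 * Real.pi))⁻¹ * Real.exp (-x ^ 2 / 2)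

/-- Standard normal cumulative distribution function. -/
def stdPhi (x : ℝ) : ℝ := ((gaussianReal 0 1) (Set.Iic x)).toReal

/-- Standard normal quantile function. -/
def stdPhiInv (p : ℝ) : ℝ := sInf {x : ℝ | p ≤ stdPhi x}

/-- Minimum distinction gap under corruption, `Δ_min = 2 Φ⁻¹(1/(2(1-ε)))`. -/
def Dmin (ε : ℝ) : ℝ := 2 * stdPhiInv (1 / (2 * (1 - ε)))

/-- `ε`-corrupted mixture `(1-ε) μ + ε H` of two measures on `ℝ`. -/
def mix (ε : ℝ) (μ H : Measure ℝ) : Measure ℝ :=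
  ENNReal.ofReal (1 - ε) • μ + ENNReal.ofReal ε • H

open Classical in
/-- Kullback–Leibler divergence. -/
def KLdiv (P Q : Measure ℝ) : ℝ≥0∞ :=
  if P ≪ Q ∧ Integrable (fun x => Real.log (P.rnDeriv Q x).toReal) P then
    ENNReal.ofReal (∫ x, Real.log (P.rnDeriv Q x).toReal ∂P) else ⊤

/-- Corrupted Gaussian divergence `kl^ε_G(x, y)`: the infimum over pairs of corruption
distributions of the KL divergence between the corrupted unit-variance Gaussians. -/
def klG (ε x y : ℝ) : ℝ≥0∞ :=
  ⨅ (H : Measure ℝ) (_ : IsProbabilityMeasure H) (H' : Measure ℝ)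
    (_ : IsProbabilityMeasure H'),
    KLdiv (mix ε (gaussianReal x 1) H) (mix ε (gaussianReal y 1) H')

/-- (Lower) median of a probability measure on `ℝ`. -/
def measMed (μ : Measure ℝ) : ℝ := sInf {x : ℝ | 1 / 2 ≤ (μ (Set.Iic x)).toReal}

/-- Quantile function of a probability measure on `ℝ`. -/
def quantile (μ : Measure ℝ) (p : ℝ) : ℝ := sInf {x : ℝ | p ≤ (μ (Set.Iic x)).toReal}

/-- Empirical median of a finite sample. -/
def empMed {n : ℕ} (X : Fin n → ℝ) : ℝ :=
  sInf {x : ℝ | (n : ℝ) ≤ 2 * Nat.card {i : Fin n // X i ≤ x}}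

/-- The variance proxy `s_ε` for the concentration of the median under corruption. -/
def sEps (ε : ℝ) : ℝ :=
  (Real.sqrt (ε / 2 / Real.log (1 / (1 - 2 * ε))) +
      Real.sqrt ((1 - 2 * ε) / (4 * Real.log ((1 - ε) / ε)))) /
    ((1 - ε) * stdphi (Dmin ε / 2 + 1))

/-- Mean of a measure on `ℝ`. -/
def meanOf (μ : Measure ℝ) : ℝ := ∫ x, x ∂μ

/-- Corrupted KL-inf `KL^ε_inf(η, x; L)`. -/
def KLinf (ε : ℝ) (η : Measure ℝ) (x : ℝ) (L : Set (Measure ℝ)) : ℝ≥0∞ :=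
  ⨅ (κ : Measure ℝ) (_ : κ ∈ L) (_ : x ≤ meanOf κ) (H : Measure ℝ)
    (_ : IsProbabilityMeasure H) (H' : Measure ℝ) (_ : IsProbabilityMeasure H'),
    KLdiv (mix ε η H) (mix ε κ H')


instance gaussNoAtoms : NullSingletonClass (gaussianReal 0 1) := by
  constructor
  intro a
  rw [gaussianReal_of_var_ne_zero _ one_ne_zero,
    withDensity_apply _ (measurableSet_singleton a)]
  simp [Measure.restrict_singleton]

lemma gauss_Ici_eq_Iic_neg (a : ℝ) :
    gaussianReal 0 1 (Ici a) = gaussianReal 0 1 (Iic (-a)) := by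
  have h : (gaussianReal 0 1).map (fun t => (-1 : ℝ) * t) = gaussianReal 0 1 := by
    rw [gaussianReal_map_const_mul (-1)]
    norm_num
  conv_lhs => rw [← h]
  rw [Measure.map_apply (by fun_prop) measurableSet_Ici]
  congr 1
  ext t
  simp only [mem_preimage, mem_Ici, mem_Iic]
  constructor <;> intro <;> linarith

lemma gauss_ne_top (s : Set ℝ) : gaussianReal 0 1 s ≠ ⊤ := measure_ne_top _ s

lemma stdPhi_mono : Monotone stdPhi := fun a b hab => by
  apply ENNReal.toReal_mono (gauss_ne_top _)
  exact measure_mono (Iic_subset_Iic.2 hab)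

lemma gauss_Iio_eq_Iic (a : ℝ) : gaussianReal 0 1 (Iio a) = gaussianReal 0 1 (Iic a) :=
  measure_congr (Iio_ae_eq_Iic)

lemma stdPhi_neg (a : ℝ) : stdPhi (-a) = 1 - stdPhi a := by
  unfold stdPhi
  rw [← gauss_Ici_eq_Iic_neg]
  have h1 : Ici a = (Iio a)ᶜ := by ext t; simp [not_lt]
  rw [h1, prob_compl_eq_one_sub measurableSet_Iio, gauss_Iio_eq_Iic,
    ENNReal.toReal_sub_of_le prob_le_one ENNReal.one_ne_top, ENNReal.toReal_one]

lemma stdPhi_zero : stdPhi 0 = 1 / 2 := by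
  have := stdPhi_neg 0
  rw [neg_zero] at this
  linarith

lemma Iio_eq_iUnion (y : ℝ) : Iio y = ⋃ n : ℕ, Iic (y - 1 / (n + 1)) := by
  ext z
  simp only [mem_Iio, mem_iUnion, mem_Iic]
  constructor
  · intro hz
    obtain ⟨n, hn⟩ := exists_nat_one_div_lt (sub_pos.2 hz)
    exact ⟨n, by push_cast at hn ⊢; linarith⟩
  · rintro ⟨n, hn⟩
    have : (0:ℝ) < 1 / (n + 1) := by positivity
    linarith

lemma stdPhi_le_of_forall_lt {y p : ℝ} (hp : 0 ≤ p)
    (h : ∀ z < y, stdPhi z ≤ p) : stdPhi y ≤ p := by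
  have hmono : Monotone fun n : ℕ => Iic (y - 1 / ((n:ℝ) + 1)) := by
    intro n m hnm
    apply Iic_subset_Iic.2
    have hc : ((n:ℝ)+1) ≤ ((m:ℝ)+1) := by
      have := (Nat.cast_le (α := ℝ)).2 hnm
      linarith
    have : (1:ℝ)/((m:ℝ)+1) ≤ 1/((n:ℝ)+1) := by
      apply one_div_le_one_div_of_le (by positivity) hc
    linarith
  have key : gaussianReal 0 1 (Iic y) ≤ ENNReal.ofReal p := by
    rw [← gauss_Iio_eq_Iic, Iio_eq_iUnion y, hmono.directed_le.measure_iUnion]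
    refine iSup_le fun n => ?_
    have hz : y - 1 / ((n:ℝ) + 1) < y := by
      have : (0:ℝ) < 1 / (n + 1) := by positivity
      linarith
    have := h _ hz
    rw [← ENNReal.ofReal_toReal (gauss_ne_top (Iic (y - 1/(n+1))))]
    exact ENNReal.ofReal_le_ofReal this
  calc stdPhi y ≤ (ENNReal.ofReal p).toReal := ENNReal.toReal_mono ENNReal.ofReal_ne_top key
    _ = p := ENNReal.toReal_ofReal hp

lemma stdPhi_le_of_le_inv {y p : ℝ} (hp : 1 / 2 < p) (hy : y ≤ stdPhiInv p) :
    stdPhi y ≤ p := by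
  have hbdd : BddBelow {x : ℝ | p ≤ stdPhi x} := by
    refine ⟨0, fun z hz => ?_⟩
    by_contra hz0
    push_neg at hz0
    have : stdPhi z ≤ stdPhi 0 := stdPhi_mono hz0.le
    rw [stdPhi_zero] at this
    have := hz
    simp only [mem_setOf_eq] at this
    linarith [hz]
  apply stdPhi_le_of_forall_lt (by linarith)
  intro z hz
  have hzlt : z < stdPhiInv p := lt_of_lt_of_le hz hy
  by_contra hc
  push_neg at hc
  exact absurd (csInf_le hbdd (le_of_lt hc)) (not_le.2 hzlt)

lemma gaussianPDFReal_one (μ t : ℝ) :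
    gaussianPDFReal μ 1 t = (Real.sqrt (2 * π))⁻¹ * rexp (-(t - μ) ^ 2 / 2) := by
  rw [gaussianPDFReal]
  norm_num

lemma gaussianPDF_comparison {x Δ t : ℝ} (h0 : 0 ≤ Δ) :
    (t ≤ x + Δ / 2 → gaussianPDF (x + Δ) 1 t ≤ gaussianPDF x 1 t) ∧
    (x + Δ / 2 ≤ t → gaussianPDF x 1 t ≤ gaussianPDF (x + Δ) 1 t) := by
  have hpos : (0:ℝ) < (Real.sqrt (2 * π))⁻¹ := by
    rw [inv_pos]
    exact Real.sqrt_pos.2 (by positivity)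
  constructor <;> intro ht <;>
  · apply ENNReal.ofReal_le_ofReal
    rw [gaussianPDFReal_one, gaussianPDFReal_one]
    apply mul_le_mul_of_nonneg_left _ hpos.le
    apply Real.exp_le_exp.2
    rw [div_le_div_iff_of_pos_right (by norm_num : (0:ℝ) < 2)]
    nlinarith

lemma gauss_shift_Ici (m c : ℝ) :
    gaussianReal m 1 (Ici c) = gaussianReal 0 1 (Ici (c - m)) := by
  have h : (gaussianReal 0 1).map (· + m) = gaussianReal m 1 := by
    rw [gaussianReal_map_add_const]; norm_num
  rw [← h, Measure.map_apply (by fun_prop) measurableSet_Ici]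
  congr 1
  ext t
  simp only [mem_preimage, mem_Ici]
  constructor <;> intro <;> linarith

lemma gauss_apply_eq_setLIntegral (m : ℝ) (s : Set ℝ) (hs : MeasurableSet s) :
    gaussianReal m 1 s = ∫⁻ t in s, gaussianPDF m 1 t := by
  rw [gaussianReal_of_var_ne_zero _ one_ne_zero, withDensity_apply _ hs]

lemma mass_eq {x Δ : ℝ} (h0 : 0 ≤ Δ) :
    ∫⁻ t, (gaussianPDF (x + Δ) 1 t - gaussianPDF x 1 t) =
      gaussianReal 0 1 (Iic (Δ / 2)) - gaussianReal 0 1 (Iic (-(Δ / 2))) := by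
  set c := x + Δ / 2 with hc
  have hind : (fun t => gaussianPDF (x + Δ) 1 t - gaussianPDF x 1 t) =
      (Ici c).indicator (fun t => gaussianPDF (x + Δ) 1 t - gaussianPDF x 1 t) := by
    funext t
    by_cases ht : t ∈ Ici c
    · rw [indicator_of_mem ht]
    · rw [indicator_of_notMem ht]
      rw [mem_Ici, not_le] at ht
      exact tsub_eq_zero_of_le ((gaussianPDF_comparison h0).1 ht.le)
  have hstep : ∫⁻ t, (gaussianPDF (x + Δ) 1 t - gaussianPDF x 1 t) =
      ∫⁻ t in Ici c, (gaussianPDF (x + Δ) 1 t - gaussianPDF x 1 t) := by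
    rw [← lintegral_indicator measurableSet_Ici]
    exact congrArg (lintegral _) hind
  rw [hstep]
  rw [lintegral_sub (measurable_gaussianPDF x 1)
    (by
      refine ne_top_of_le_ne_top ?_ (setLIntegral_le_lintegral _ _)
      rw [lintegral_gaussianPDF_eq_one x one_ne_zero]
      exact ENNReal.one_ne_top)
    (ae_restrict_of_forall_mem measurableSet_Ici fun t ht =>
      (gaussianPDF_comparison h0).2 ht)]
  rw [← gauss_apply_eq_setLIntegral _ _ measurableSet_Ici,
    ← gauss_apply_eq_setLIntegral _ _ measurableSet_Ici,
    gauss_shift_Ici (x + Δ), gauss_shift_Ici x, gauss_Ici_eq_Iic_neg, gauss_Ici_eq_Iic_neg]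
  norm_num
  ring_nf

lemma key_mass_le {ε x Δ : ℝ} (hε : ε ∈ Set.Ioo (0:ℝ) (1/2)) (h0 : 0 ≤ Δ)
    (h1 : Δ ≤ Dmin ε) :
    ENNReal.ofReal (1 - ε) * (∫⁻ t, (gaussianPDF (x + Δ) 1 t - gaussianPDF x 1 t))
      ≤ ENNReal.ofReal ε := by
  obtain ⟨hε0, hε2⟩ := hε
  have h1e : (0:ℝ) < 1 - ε := by linarith
  set p := 1 / (2 * (1 - ε)) with hp
  have hp2 : 1 / 2 < p := by
    rw [hp]
    apply one_div_lt_one_div_of_lt (by positivity)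
    linarith
  set A := stdPhi (Δ / 2) with hA
  set B := stdPhi (-(Δ / 2)) with hB
  have hBA : B = 1 - A := stdPhi_neg (Δ / 2)
  have hAp : A ≤ p := by
    apply stdPhi_le_of_le_inv hp2
    have : Dmin ε = 2 * stdPhiInv p := rfl
    linarith [h1.trans_eq this]
  have hA0 : 0 ≤ A := ENNReal.toReal_nonneg
  have hB0 : 0 ≤ B := ENNReal.toReal_nonneg
  have hmA : gaussianReal 0 1 (Iic (Δ / 2)) = ENNReal.ofReal A :=
    (ENNReal.ofReal_toReal (gauss_ne_top _)).symm
  have hmB : gaussianReal 0 1 (Iic (-(Δ / 2))) = ENNReal.ofReal B :=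
    (ENNReal.ofReal_toReal (gauss_ne_top _)).symm
  rw [mass_eq h0, hmA, hmB, ← ENNReal.ofReal_sub _ hB0,
    ← ENNReal.ofReal_mul h1e.le]
  apply ENNReal.ofReal_le_ofReal
  have h2 : A * (2 * (1 - ε)) ≤ 1 := by
    have := (le_div_iff₀ (by positivity : (0:ℝ) < 2 * (1 - ε))).1 hAp
    linarith
  nlinarith

lemma KLdiv_self (P : Measure ℝ) [SigmaFinite P] : KLdiv P P = 0 := by
  classical
  have hae : (fun x => Real.log (P.rnDeriv P x).toReal) =ᵐ[P] fun _ => (0:ℝ) := by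
    filter_upwards [P.rnDeriv_self] with x hx
    rw [hx]
    simp
  rw [KLdiv, if_pos ⟨Measure.AbsolutelyContinuous.rfl,
    (integrable_zero _ _ _).congr hae.symm⟩]
  rw [integral_congr_ae hae]
  simp

lemma mix_eq_construction {ε x Δ : ℝ} (hε : ε ∈ Set.Ioo (0:ℝ) (1/2)) (h0 : 0 ≤ Δ)
    (h1 : Δ ≤ Dmin ε) :
    ∃ H H' : Measure ℝ, IsProbabilityMeasure H ∧ IsProbabilityMeasure H' ∧
      mix ε (gaussianReal x 1) H = mix ε (gaussianReal (x + Δ) 1) H' := by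
  obtain ⟨hε0, hε2⟩ := hε
  set a : ℝ≥0∞ := ENNReal.ofReal (1 - ε) with ha
  set b : ℝ≥0∞ := ENNReal.ofReal ε with hb
  have hb0 : b ≠ 0 := by
    simp only [hb, ne_eq, ENNReal.ofReal_eq_zero, not_le]
    exact hε0
  have hbt : b ≠ ⊤ := ENNReal.ofReal_ne_top
  set g1 := gaussianPDF x 1 with hg1
  set g2 := gaussianPDF (x + Δ) 1 with hg2
  have hg1m : Measurable g1 := measurable_gaussianPDF x 1
  have hg2m : Measurable g2 := measurable_gaussianPDF (x + Δ) 1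
  set dp : ℝ → ℝ≥0∞ := fun t => g2 t - g1 t with hdp
  set dm : ℝ → ℝ≥0∞ := fun t => g1 t - g2 t with hdm
  have hdpm : Measurable dp := hg2m.sub hg1m
  have hdmm : Measurable dm := hg1m.sub hg2m
  set m : ℝ≥0∞ := ∫⁻ t, dp t with hm
  set m' : ℝ≥0∞ := ∫⁻ t, dm t with hm'
  have hint1 : ∫⁻ t, g1 t = 1 := lintegral_gaussianPDF_eq_one x one_ne_zero
  have hint2 : ∫⁻ t, g2 t = 1 := lintegral_gaussianPDF_eq_one (x + Δ) one_ne_zero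
  have hpt : ∀ t, g1 t + dp t = g2 t + dm t := by
    intro t
    rcases le_total (g1 t) (g2 t) with h | h
    · rw [add_tsub_cancel_of_le h, hdm]
      simp only [tsub_eq_zero_of_le h, add_zero]
    · rw [hdp]
      simp only [tsub_eq_zero_of_le h, add_zero]
      rw [add_tsub_cancel_of_le h]
  have key : a * m ≤ b := key_mass_le ⟨hε0, hε2⟩ h0 h1
  have hmm' : m = m' := by
    have h1' : (∫⁻ t, (g1 t + dp t)) = 1 + m := by
      rw [lintegral_add_left hg1m, hint1]
    have h2' : (∫⁻ t, (g2 t + dm t)) = 1 + m' := by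
      rw [lintegral_add_left hg2m, hint2]
    have heq : (1:ℝ≥0∞) + m = 1 + m' := by
      rw [← h1', ← h2']
      exact lintegral_congr hpt
    exact (ENNReal.add_right_inj ENNReal.one_ne_top).1 heq
  set q : ℝ≥0∞ := a / b * m with hq
  have hq1 : q ≤ 1 := by
    rw [hq, div_eq_mul_inv, mul_right_comm, ← div_eq_mul_inv,
      ENNReal.div_le_iff hb0 hbt, one_mul]
    exact key
  set c0 : ℝ≥0∞ := 1 - q with hc0
  have hba : b * (a / b) = a := by
    rw [mul_comm]
    exact ENNReal.div_mul_cancel hb0 hbt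
  set hH : ℝ → ℝ≥0∞ := fun t => a / b * dp t + c0 * g1 t with hhH
  set hH' : ℝ → ℝ≥0∞ := fun t => a / b * dm t + c0 * g1 t with hhH'
  have hHm : Measurable hH := (hdpm.const_mul _).add (hg1m.const_mul _)
  have hH'm : Measurable hH' := (hdmm.const_mul _).add (hg1m.const_mul _)
  refine ⟨volume.withDensity hH, volume.withDensity hH', ?_, ?_, ?_⟩
  · constructor
    rw [withDensity_apply _ MeasurableSet.univ, Measure.restrict_univ, hhH]
    rw [lintegral_add_left (hdpm.const_mul _), lintegral_const_mul _ hdpm,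
      lintegral_const_mul _ hg1m, hint1, mul_one]
    rw [add_comm]
    exact tsub_add_cancel_of_le hq1
  · constructor
    rw [withDensity_apply _ MeasurableSet.univ, Measure.restrict_univ, hhH']
    rw [lintegral_add_left (hdmm.const_mul _), lintegral_const_mul _ hdmm,
      lintegral_const_mul _ hg1m, hint1, mul_one]
    have hr : (∫⁻ t, dm t) = m := hmm'.symm
    rw [hr, add_comm]
    exact tsub_add_cancel_of_le hq1
  · have hgr1 : gaussianReal x 1 = volume.withDensity g1 :=
      gaussianReal_of_var_ne_zero x one_ne_zero
    have hgr2 : gaussianReal (x + Δ) 1 = volume.withDensity g2 :=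
      gaussianReal_of_var_ne_zero (x + Δ) one_ne_zero
    rw [mix, mix, hgr1, hgr2,
      ← withDensity_smul a hg1m, ← withDensity_smul a hg2m,
      ← withDensity_smul b hHm, ← withDensity_smul b hH'm,
      ← withDensity_add_left (hg1m.const_smul a) (b • hH),
      ← withDensity_add_left (hg2m.const_smul a) (b • hH')]
    congr 1
    funext t
    simp only [Pi.add_apply, Pi.smul_apply, smul_eq_mul, hhH, hhH']
    rw [mul_add, mul_add, ← mul_assoc, ← mul_assoc, hba]
    have hkey : a * g1 t + a * dp t = a * g2 t + a * dm t := by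
      rw [← mul_add, ← mul_add, hpt t]
    rw [← add_assoc, ← add_assoc]
    rw [show a * g1 t + a * dp t = a * g2 t + a * dm t from hkey]
    rw [← mul_assoc, hba]
/-- the corrupted Gaussian divergence vanishes below the minimum gap. -/
theorem klG_eq_zero_of_le_Dmin (ε x Δ : ℝ) (hε : ε ∈ Set.Ioo (0 : ℝ) (1 / 2))
    (h0 : 0 ≤ Δ) (h1 : Δ ≤ Dmin ε) :
    klG ε x (x + Δ) = 0 := by
  obtain ⟨H, H', hH, hH', heq⟩ := mix_eq_construction hε h0 h1
  have hfin : IsFiniteMeasure (mix ε (gaussianReal (x + Δ) 1) H') := by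
    constructor
    rw [mix]
    simp only [Measure.coe_add, Pi.add_apply, Measure.smul_apply, smul_eq_mul,
      measure_univ, mul_one]
    exact ENNReal.add_lt_top.2 ⟨ENNReal.ofReal_lt_top, ENNReal.ofReal_lt_top⟩
  haveI := hfin
  refine le_antisymm ?_ zero_le
  have hle : klG ε x (x + Δ) ≤
      KLdiv (mix ε (gaussianReal x 1) H) (mix ε (gaussianReal (x + Δ) 1) H') := by
    rw [klG]
    exact iInf_le_of_le H (iInf_le_of_le hH (iInf_le_of_le H'
      (iInf_le_of_le hH' le_rfl)))
  rw [heq] at hle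
  rwa [KLdiv_self] at hle
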